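/- Let f : ℝ^n → ℝ^n be continuously differentiable with global flow φ, and let A ⊆ ℝ^n be a set such that f(x) ≠ 0 for every x ∈ A. Let v be a point in the interior of A. Then there exists t̄₀ > 0 such that for every t̄ ∈ (0, t̄₀] there exists σ > 0 such that: (i) the tube Φ := {φ(t,x) : t ∈ [0,t̄], x ∈ B̄(v,σ)} is contained in the interior of A; and (ii) there exists a closed set Σ ⊆ Φ such that for every q ∈ B̄(v,σ) there is a unique t_q ∈ [0,t̄] with φ(t_q, q) ∈ Σ. -/

import Mathlib

open Set Metric

lemma stay_in_ball {E : Type*} [NormedAddCommGroup E] [NormedSpace ℝ E]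
    (f : E → E) (φ : ℝ → E → E) (hφ0 : ∀ x, φ 0 x = x)
    (hφ' : ∀ t x, HasDerivAt (fun s => φ s x) (f (φ t x)) t)
    (v : E) {r M tbar σ : ℝ}
    (hbound : ∀ y ∈ closedBall v r, ‖f y‖ ≤ M)
    (hσM : σ + M * tbar < r) (hσ0 : 0 ≤ σ) (htbar : 0 ≤ tbar) (hM : 0 ≤ M)
    (q : E) (hq : q ∈ closedBall v σ) :
    ∀ t ∈ Icc (0:ℝ) tbar, φ t q ∈ closedBall v r := by
  have hcont : Continuous (fun s => φ s q) :=
    continuous_iff_continuousAt.2 fun t => (hφ' t q).continuousAt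
  have hdq : dist q v ≤ σ := mem_closedBall.1 hq
  have hσr : σ < r := lt_of_le_of_lt (le_add_of_nonneg_right (mul_nonneg hM htbar)) hσM
  by_contra hbad
  push_neg at hbad
  obtain ⟨t₁, ht₁, ht₁r⟩ := hbad
  set B : Set ℝ := {t ∈ Icc (0:ℝ) tbar | r < dist (φ t q) v} with hB
  have hBne : B.Nonempty := ⟨t₁, ht₁, by simpa [mem_closedBall, not_le] using ht₁r⟩
  have hBsub : B ⊆ Icc 0 tbar := fun t ht => ht.1
  have hBbdd : BddBelow B := ⟨0, fun t ht => (hBsub ht).1⟩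
  set T := sInf B with hT
  have hTcl : T ∈ closure B := csInf_mem_closure hBne hBbdd
  have hTIcc : T ∈ Icc (0:ℝ) tbar := by
    have : closure B ⊆ Icc 0 tbar := closure_minimal hBsub isClosed_Icc
    exact this hTcl
  have hcd : Continuous (fun t => dist (φ t q) v) := (hcont.dist continuous_const)
  have hrT : r ≤ dist (φ T q) v := by
    have : closure B ⊆ {t | r ≤ dist (φ t q) v} := by
      apply closure_minimal _ (isClosed_le continuous_const hcd)
      exact fun t ht => le_of_lt ht.2
    exact this hTcl
  have hbelow : ∀ s, 0 ≤ s → s < T → dist (φ s q) v ≤ r := by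
    intro s hs0 hsT
    by_contra hsr
    push_neg at hsr
    have : s ∈ B := ⟨⟨hs0, hsT.le.trans hTIcc.2⟩, hsr⟩
    exact absurd (csInf_le hBbdd this) (not_le.2 hsT)
  have hT0 : 0 < T := by
    rcases hTIcc.1.lt_or_eq with h | h
    · exact h
    · exfalso
      rw [← h] at hrT
      rw [hφ0] at hrT
      have : r ≤ σ := hrT.trans hdq
      exact absurd this (not_le.2 hσr)
  have hTle : dist (φ T q) v ≤ r := by
    have hTmem : T ∈ closure (Ico (0:ℝ) T) := by
      rw [closure_Ico (ne_of_lt hT0)]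
      exact ⟨le_refl 0 |>.trans hTIcc.1, le_rfl⟩
    have hsub : Ico (0:ℝ) T ⊆ {t | dist (φ t q) v ≤ r} := fun s hs => hbelow s hs.1 hs.2
    have : closure (Ico (0:ℝ) T) ⊆ {t | dist (φ t q) v ≤ r} :=
      closure_minimal hsub (isClosed_le hcd continuous_const)
    exact this hTmem
  have hmem : ∀ s ∈ Icc (0:ℝ) T, φ s q ∈ closedBall v r := by
    intro s hs
    rcases hs.2.lt_or_eq with h | h
    · exact mem_closedBall.2 (hbelow s hs.1 h)
    · rw [h]; exact mem_closedBall.2 hTle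
  have hMVT : ‖φ T q - φ 0 q‖ ≤ M * ‖T - 0‖ := by
    apply (convex_Icc (0:ℝ) T).norm_image_sub_le_of_norm_hasDerivWithin_le
      (f' := fun s => f (φ s q)) (fun s hs => (hφ' s q).hasDerivWithinAt)
      (fun s hs => hbound _ (hmem s hs)) (left_mem_Icc.2 hT0.le) (right_mem_Icc.2 hT0.le)
  have : r ≤ σ + M * tbar := by
    calc r ≤ dist (φ T q) v := hrT
    _ ≤ dist (φ T q) q + dist q v := dist_triangle _ _ _
    _ ≤ M * T + σ := by
        apply add_le_add _ hdq
        have : dist (φ T q) q = ‖φ T q - φ 0 q‖ := by rw [hφ0, dist_eq_norm]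
        rw [this]
        calc ‖φ T q - φ 0 q‖ ≤ M * ‖T - 0‖ := hMVT
        _ = M * T := by rw [sub_zero, Real.norm_of_nonneg hT0.le]
    _ ≤ σ + M * tbar := by
        rw [add_comm]
        exact add_le_add le_rfl (mul_le_mul_of_nonneg_left hTIcc.2 hM)
  exact absurd this (not_le.2 hσM)

set_option maxHeartbeats 1000000 in
/-- Near an interior point `v` of a set `A` on which the vector field `f` has no
equilibria, a sufficiently short flow tube stays in the interior of `A` and admits
a forward local section. -/
theorem stmt_2 (n : ℕ) (hn : 1 ≤ n)
    (f : EuclideanSpace ℝ (Fin n) → EuclideanSpace ℝ (Fin n))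
    (hf : ContDiff ℝ 1 f)
    (φ : ℝ → EuclideanSpace ℝ (Fin n) → EuclideanSpace ℝ (Fin n))
    (hφ0 : ∀ x, φ 0 x = x)
    (hφ' : ∀ (t : ℝ) (x : EuclideanSpace ℝ (Fin n)),
      HasDerivAt (fun s => φ s x) (f (φ t x)) t)
    (A : Set (EuclideanSpace ℝ (Fin n))) (hA : ∀ x ∈ A, f x ≠ 0)
    (v : EuclideanSpace ℝ (Fin n)) (hv : v ∈ interior A) :
    ∃ tbar0 > (0:ℝ), ∀ tbar ∈ Ioc (0:ℝ) tbar0, ∃ σ > (0:ℝ),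
      {y | ∃ t ∈ Icc (0:ℝ) tbar, ∃ x ∈ closedBall v σ, y = φ t x} ⊆ interior A ∧
      ∃ S : Set (EuclideanSpace ℝ (Fin n)), IsClosed S ∧
        S ⊆ {y | ∃ t ∈ Icc (0:ℝ) tbar, ∃ x ∈ closedBall v σ, y = φ t x} ∧
        ∀ q ∈ closedBall v σ, ∃! tq, tq ∈ Icc (0:ℝ) tbar ∧ φ tq q ∈ S := by
  have hvA : v ∈ A := interior_subset hv
  set w := f v with hwdef
  have hw : w ≠ 0 := hA v hvA
  have hw2 : (0:ℝ) < ‖w‖ := norm_pos_iff.mpr hw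
  have hfc : Continuous f := hf.continuous
  -- radius r1 for interior
  obtain ⟨r1, hr1pos, hr1⟩ : ∃ r > (0:ℝ), closedBall v r ⊆ interior A := by
    rcases Metric.isOpen_iff.1 isOpen_interior v hv with ⟨ε, hε, hb⟩
    exact ⟨ε/2, by positivity, (closedBall_subset_ball (by linarith)).trans hb⟩
  -- radius r2 for inner product positivity
  obtain ⟨r2, hr2pos, hr2⟩ : ∃ r > (0:ℝ), ∀ y ∈ closedBall v r,
      ‖w‖^2/2 ≤ (inner ℝ w (f y) : ℝ) := by
    have hco : Continuous (fun y => (inner ℝ w (f y) : ℝ)) := continuous_const.inner hfc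
    have hopen : IsOpen {y | ‖w‖^2/2 < (inner ℝ w (f y) : ℝ)} :=
      isOpen_lt continuous_const hco
    have hvmem : v ∈ {y | ‖w‖^2/2 < (inner ℝ w (f y) : ℝ)} := by
      have : (inner ℝ w (f v) : ℝ) = ‖w‖^2 := by
        rw [← hwdef, real_inner_self_eq_norm_sq]
      simp only [mem_setOf_eq, this]
      nlinarith
    rcases Metric.isOpen_iff.1 hopen v hvmem with ⟨ε, hε, hb⟩
    refine ⟨ε/2, by positivity, fun y hy => ?_⟩
    have : y ∈ ball v ε := lt_of_le_of_lt (mem_closedBall.1 hy) (by linarith)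
    exact (hb this).le
  set r := min r1 r2 with hrdef
  have hrpos : 0 < r := lt_min hr1pos hr2pos
  -- bound M on f over the closed ball
  obtain ⟨M0, hM0⟩ := (isCompact_closedBall v r).exists_bound_of_continuousOn hfc.continuousOn
  set M := max M0 1 with hMdef
  have hM1 : (1:ℝ) ≤ M := le_max_right _ _
  have hMpos : (0:ℝ) < M := lt_of_lt_of_le one_pos hM1
  have hbound : ∀ y ∈ closedBall v r, ‖f y‖ ≤ M :=
    fun y hy => (hM0 y hy).trans (le_max_left _ _)
  -- Lipschitz constant on the ball
  obtain ⟨C, hC⟩ := (isCompact_closedBall v r).exists_bound_of_continuousOn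
    ((hf.continuous_fderiv one_ne_zero).continuousOn)
  set K : NNReal := C.toNNReal with hKdef
  have hlip : LipschitzOnWith K f (closedBall v r) := by
    apply Convex.lipschitzOnWith_of_nnnorm_fderiv_le
      (fun x _ => (hf.differentiable one_ne_zero) x) _ (convex_closedBall v r)
    intro x hx
    rw [← norm_toNNReal]
    exact Real.toNNReal_mono (hC x hx)
  refine ⟨r / (4 * M), by positivity, ?_⟩
  rintro tbar ⟨htbar0, htbar_le⟩
  set σ := min (r/4) (tbar * ‖w‖ / 4) with hσdef
  have hσpos : 0 < σ := lt_min (by positivity) (by positivity)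
  have hσ1 : σ ≤ r/4 := min_le_left _ _
  have hσ2 : σ ≤ tbar * ‖w‖ / 4 := min_le_right _ _
  have hMt : M * tbar ≤ r/4 := by
    have h4 : (0:ℝ) < 4 * M := by positivity
    have := (le_div_iff₀ h4).1 htbar_le
    nlinarith
  have hσM : σ + M * tbar < r := by nlinarith
  have stay : ∀ q ∈ closedBall v σ, ∀ t ∈ Icc (0:ℝ) tbar, φ t q ∈ closedBall v r :=
    fun q hq => stay_in_ball f φ hφ0 hφ' v hbound hσM hσpos.le htbar0.le hMpos.le q hq
  have hconts : ∀ x, Continuous (fun s => φ s x) :=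
    fun x => continuous_iff_continuousAt.2 fun t => (hφ' t x).continuousAt
  -- tube inside interior A
  have htube_sub : {y | ∃ t ∈ Icc (0:ℝ) tbar, ∃ x ∈ closedBall v σ, y = φ t x} ⊆ interior A := by
    rintro y ⟨t, ht, x, hx, rfl⟩
    exact hr1 ((closedBall_subset_closedBall (min_le_left r1 r2)) (stay x hx t ht))
  -- spatial Lipschitz estimate (Grönwall)
  have hgron : ∀ x ∈ closedBall v σ, ∀ x' ∈ closedBall v σ, ∀ t ∈ Icc (0:ℝ) tbar,
      dist (φ t x) (φ t x') ≤ dist x x' * Real.exp (K * tbar) := by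
    intro x hx x' hx' t ht
    have h1 := dist_le_of_trajectories_ODE_of_mem
      (v := fun _ y => f y) (s := fun _ => closedBall v r) (K := K)
      (f := fun s => φ s x) (g := fun s => φ s x') (a := 0) (b := tbar)
      (δ := dist x x')
      (fun _ _ => hlip)
      (hconts x).continuousOn
      (fun s _ => (hφ' s x).hasDerivWithinAt)
      (fun s hs => stay x hx s ⟨hs.1, hs.2.le⟩)
      (hconts x').continuousOn
      (fun s _ => (hφ' s x').hasDerivWithinAt)
      (fun s hs => stay x' hx' s ⟨hs.1, hs.2.le⟩)
      (by simp [hφ0]) t ht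
    refine h1.trans ?_
    apply mul_le_mul_of_nonneg_left _ dist_nonneg
    apply Real.exp_le_exp.2
    rw [sub_zero]
    exact mul_le_mul_of_nonneg_left ht.2 K.2
  -- time Lipschitz estimate
  have htime : ∀ x ∈ closedBall v σ, ∀ t ∈ Icc (0:ℝ) tbar, ∀ t' ∈ Icc (0:ℝ) tbar,
      dist (φ t x) (φ t' x) ≤ M * dist t t' := by
    intro x hx t ht t' ht'
    rw [dist_eq_norm, Real.dist_eq, ← Real.norm_eq_abs]
    apply (convex_Icc (0:ℝ) tbar).norm_image_sub_le_of_norm_hasDerivWithin_le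
      (f' := fun s => f (φ s x)) (fun s _ => (hφ' s x).hasDerivWithinAt)
      (fun s hs => hbound _ (stay x hx s hs)) ht' ht
  -- joint continuity on the compact tube parameter set
  have hFcont : ContinuousOn (fun p : ℝ × EuclideanSpace ℝ (Fin n) => φ p.1 p.2)
      (Icc (0:ℝ) tbar ×ˢ closedBall v σ) := by
    have hL : LipschitzOnWith ((M + Real.exp (K * tbar)).toNNReal)
        (fun p : ℝ × EuclideanSpace ℝ (Fin n) => φ p.1 p.2)
        (Icc (0:ℝ) tbar ×ˢ closedBall v σ) := by
      rw [lipschitzOnWith_iff_dist_le_mul]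
      rintro ⟨t, x⟩ ⟨ht, hx⟩ ⟨t', x'⟩ ⟨ht', hx'⟩
      have h1 := htime x' hx' t ht t' ht'
      have h2 := hgron x hx x' hx' t ht
      have hd1 : dist t t' ≤ dist ((t,x) : ℝ × EuclideanSpace ℝ (Fin n)) (t',x') := by
        rw [Prod.dist_eq]; exact le_max_left _ _
      have hd2 : dist x x' ≤ dist ((t,x) : ℝ × EuclideanSpace ℝ (Fin n)) (t',x') := by
        rw [Prod.dist_eq]; exact le_max_right _ _
      have hcoe : ((M + Real.exp (K * tbar)).toNNReal : ℝ) = M + Real.exp (K * tbar) :=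
        Real.coe_toNNReal _ (by positivity)
      calc dist (φ t x) (φ t' x')
          ≤ dist (φ t x) (φ t x') + dist (φ t x') (φ t' x') := dist_triangle _ _ _
        _ ≤ dist x x' * Real.exp (K * tbar) + M * dist t t' := add_le_add h2 h1
        _ ≤ ((M + Real.exp (K * tbar)).toNNReal : ℝ) *
              dist ((t,x) : ℝ × EuclideanSpace ℝ (Fin n)) (t',x') := by
            rw [hcoe]
            have he : (0:ℝ) < Real.exp (K * tbar) := Real.exp_pos _
            nlinarith [dist_nonneg (x := (t,x)) (y := ((t',x') : ℝ × EuclideanSpace ℝ (Fin n))),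
              dist_nonneg (x := x) (y := x'), dist_nonneg (x := t) (y := t')]
    exact hL.continuousOn
  have htubeeq : {y | ∃ t ∈ Icc (0:ℝ) tbar, ∃ x ∈ closedBall v σ, y = φ t x}
      = (fun p : ℝ × EuclideanSpace ℝ (Fin n) => φ p.1 p.2) ''
        (Icc (0:ℝ) tbar ×ˢ closedBall v σ) := by
    ext y
    constructor
    · rintro ⟨t, ht, x, hx, rfl⟩; exact ⟨(t,x), ⟨ht, hx⟩, rfl⟩
    · rintro ⟨⟨t,x⟩, ⟨ht,hx⟩, rfl⟩; exact ⟨t, ht, x, hx, rfl⟩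
  have htubeclosed : IsClosed {y | ∃ t ∈ Icc (0:ℝ) tbar, ∃ x ∈ closedBall v σ, y = φ t x} := by
    rw [htubeeq]
    exact ((isCompact_Icc.prod (isCompact_closedBall v σ)).image_of_continuousOn hFcont).isClosed
  refine ⟨σ, hσpos, htube_sub,
    {y | ∃ t ∈ Icc (0:ℝ) tbar, ∃ x ∈ closedBall v σ, y = φ t x} ∩
      {y | (inner ℝ w (y - v) : ℝ) = σ * ‖w‖}, ?_, inter_subset_left, ?_⟩
  · exact htubeclosed.inter (isClosed_eq
      (continuous_const.inner (continuous_id.sub continuous_const)) continuous_const)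
  intro q hq
  set g : ℝ → ℝ := fun t => (inner ℝ w (φ t q - v) : ℝ) with hgdef
  have hg' : ∀ t, HasDerivAt g (inner ℝ w (f (φ t q)) : ℝ) t := by
    intro t
    have h1 : HasDerivAt (fun s => φ s q - v) (f (φ t q)) t := (hφ' t q).sub_const v
    have h2 := (innerSL ℝ w).hasFDerivAt.comp_hasDerivAt t h1
    exact h2
  have hgc : Continuous g := continuous_iff_continuousAt.2 fun t => (hg' t).continuousAt
  have hwin : ∀ t ∈ Icc (0:ℝ) tbar, ‖w‖^2/2 ≤ (inner ℝ w (f (φ t q)) : ℝ) :=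
    fun t ht => hr2 _ ((closedBall_subset_closedBall (min_le_right r1 r2)) (stay q hq t ht))
  have hmono : StrictMonoOn g (Icc 0 tbar) := by
    apply strictMonoOn_of_deriv_pos (convex_Icc _ _) hgc.continuousOn
    intro t ht
    rw [interior_Icc] at ht
    rw [(hg' t).deriv]
    have := hwin t ⟨ht.1.le, ht.2.le⟩
    nlinarith
  have hincr : ‖w‖^2/2 * tbar ≤ g tbar - g 0 := by
    set G : ℝ → ℝ := fun t => g t - ‖w‖^2/2 * t with hGdef
    have hG' : ∀ t, HasDerivAt G ((inner ℝ w (f (φ t q)) : ℝ) - ‖w‖^2/2) t := by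
      intro t
      have := (hg' t).sub ((hasDerivAt_id t).const_mul (‖w‖^2/2))
      simp only [mul_one] at this; exact this
    have hGm : MonotoneOn G (Icc 0 tbar) := by
      apply monotoneOn_of_deriv_nonneg (convex_Icc _ _)
        (continuous_iff_continuousAt.2 fun t => (hG' t).continuousAt).continuousOn
        (fun t _ => (hG' t).differentiableAt.differentiableWithinAt)
      intro t ht
      rw [interior_Icc] at ht
      rw [(hG' t).deriv]
      have := hwin t ⟨ht.1.le, ht.2.le⟩
      linarith
    have := hGm (left_mem_Icc.2 htbar0.le) (right_mem_Icc.2 htbar0.le) htbar0.le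
    simp only [hGdef] at this
    linarith
  have hg0 : g 0 = (inner ℝ w (q - v) : ℝ) := by rw [hgdef]; simp [hφ0]
  have hqv : ‖q - v‖ ≤ σ := by rw [← dist_eq_norm]; exact mem_closedBall.1 hq
  have hg0_le : g 0 ≤ σ * ‖w‖ := by
    rw [hg0]
    calc (inner ℝ w (q - v) : ℝ) ≤ ‖w‖ * ‖q - v‖ := real_inner_le_norm _ _
      _ ≤ ‖w‖ * σ := mul_le_mul_of_nonneg_left hqv hw2.le
      _ = σ * ‖w‖ := mul_comm _ _
  have hg0_ge : -(σ * ‖w‖) ≤ g 0 := by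
    rw [hg0]
    have := abs_real_inner_le_norm w (q - v)
    have h2 : ‖w‖ * ‖q - v‖ ≤ σ * ‖w‖ := by
      rw [mul_comm]; exact mul_le_mul_of_nonneg_right hqv hw2.le
    have := neg_abs_le (inner ℝ w (q - v) : ℝ)
    nlinarith [abs_real_inner_le_norm w (q - v)]
  have htbar_c : σ * ‖w‖ ≤ g tbar := by nlinarith
  obtain ⟨t0, ht0, hgt0⟩ := intermediate_value_Icc htbar0.le hgc.continuousOn ⟨hg0_le, htbar_c⟩
  refine ⟨t0, ⟨ht0, ⟨⟨t0, ht0, q, hq, rfl⟩, hgt0⟩⟩, ?_⟩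
  rintro t1 ⟨ht1, -, hS2⟩
  exact hmono.injOn ht1 ht0 ((show g t1 = σ * ‖w‖ from hS2).trans hgt0.symm)
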